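/- Let q1, q2, q3, q4 be four points in the Euclidean plane ℝ² such that q2 − q1 = t • (q3 − q4) for some real t > 0, with q1, q2, q4 not collinear, and suppose r12 ≠ r34. Then r13² − r24² = (r14² − r23²)(r34 + r12)/(r12 − r34). In particular, if r12 > r34 and r14 ≥ r23, then r13 ≥ r24. -/

import Mathlib

set_option maxHeartbeats 1000000 in
theorem trapezoid_diagonal_difference (q1 q2 q3 q4 : EuclideanSpace ℝ (Fin 2)) (t : ℝ)
    (ht : 0 < t) (hpar : q2 - q1 = t • (q3 - q4))
    (hncol : ¬ Collinear ℝ ({q1, q2, q4} : Set (EuclideanSpace ℝ (Fin 2))))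
    (hne : dist q1 q2 ≠ dist q3 q4) :
    dist q1 q3 ^ 2 - dist q2 q4 ^ 2 =
        (dist q1 q4 ^ 2 - dist q2 q3 ^ 2) * (dist q3 q4 + dist q1 q2) /
          (dist q1 q2 - dist q3 q4) ∧
      (dist q3 q4 < dist q1 q2 → dist q2 q3 ≤ dist q1 q4 →
        dist q2 q4 ≤ dist q1 q3) := by
  set a := q4 - q1 with ha
  set v := q3 - q4 with hv
  have h12 : dist q1 q2 = t * dist q3 q4 := by
    rw [dist_eq_norm, ← norm_sub_rev, hpar, norm_smul, Real.norm_eq_abs, abs_of_pos ht,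
      dist_eq_norm]
  have hd34 : dist q3 q4 = ‖v‖ := dist_eq_norm _ _
  have hd14 : dist q1 q4 = ‖a‖ := by rw [dist_eq_norm, ← norm_sub_rev]
  have hd13 : dist q1 q3 = ‖a + v‖ := by
    rw [dist_eq_norm, ← norm_sub_rev]; congr 1; rw [ha, hv]; abel
  have hd24 : dist q2 q4 = ‖a - t • v‖ := by
    rw [dist_eq_norm, ← norm_sub_rev]; congr 1; rw [ha, ← hpar]; abel
  have hd23 : dist q2 q3 = ‖a + (1 - t) • v‖ := by
    rw [dist_eq_norm, ← norm_sub_rev]; congr 1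
    rw [sub_smul, one_smul, ha, ← hpar, hv]; abel
  have e13 : dist q1 q3 ^ 2 = ‖a‖ ^ 2 + 2 * inner ℝ a v + ‖v‖ ^ 2 := by
    rw [hd13, @norm_add_sq_real]
  have e24 : dist q2 q4 ^ 2 = ‖a‖ ^ 2 - 2 * t * inner ℝ a v + t ^ 2 * ‖v‖ ^ 2 := by
    rw [hd24, @norm_sub_sq_real, real_inner_smul_right, norm_smul, Real.norm_eq_abs,
      mul_pow, sq_abs]
    ring
  have e23 : dist q2 q3 ^ 2 = ‖a‖ ^ 2 + 2 * (1 - t) * inner ℝ a v + (1 - t) ^ 2 * ‖v‖ ^ 2 := by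
    rw [hd23, @norm_add_sq_real, real_inner_smul_right, norm_smul, Real.norm_eq_abs,
      mul_pow, sq_abs]
    ring
  have hVne : ‖v‖ ≠ 0 := by
    intro h
    apply hne
    rw [h12, hd34, h, mul_zero]
  have hV : 0 < ‖v‖ := lt_of_le_of_ne (norm_nonneg v) (Ne.symm hVne)
  have ht1 : t ≠ 1 := by
    intro h
    apply hne
    rw [h12, h, one_mul]
  have hden : dist q1 q2 - dist q3 q4 ≠ 0 := sub_ne_zero.mpr hne
  have key : dist q1 q3 ^ 2 - dist q2 q4 ^ 2 =
      (dist q1 q4 ^ 2 - dist q2 q3 ^ 2) * (dist q3 q4 + dist q1 q2) /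
        (dist q1 q2 - dist q3 q4) := by
    rw [e13, e24, e23, hd14, h12, hd34]
    have hden' : t * ‖v‖ - ‖v‖ ≠ 0 := by
      intro h
      apply ht1
      have := sub_eq_zero.mp h
      field_simp at this
      exact this
    field_simp
    ring
  refine ⟨key, fun hlt hle => ?_⟩
  have ht1' : 1 < t := by
    rw [h12, hd34] at hlt
    nlinarith
  have h2 : dist q2 q3 ^ 2 ≤ dist q1 q4 ^ 2 := by
    have := dist_nonneg (x := q2) (y := q3)
    nlinarith
  have hpos : 0 < dist q1 q2 - dist q3 q4 := by
    rw [h12, hd34]; nlinarith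
  have h3 : dist q2 q4 ^ 2 ≤ dist q1 q3 ^ 2 := by
    have h4 : 0 ≤ (dist q1 q4 ^ 2 - dist q2 q3 ^ 2) * (dist q3 q4 + dist q1 q2) /
        (dist q1 q2 - dist q3 q4) := by
      apply div_nonneg _ hpos.le
      apply mul_nonneg (by linarith)
      have := dist_nonneg (x := q3) (y := q4)
      have := dist_nonneg (x := q1) (y := q2)
      linarith
    linarith [key]
  have := dist_nonneg (x := q2) (y := q4)
  have := dist_nonneg (x := q1) (y := q3)
  nlinarith
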